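/- Let Λ be a commutative local uniserial ring of length n with radical generator p. Let (B;A) be a pair with B finitely generated and p·A = 0 (A is semisimple). If there is an embedding of pairs (E; soc E) → (B;A) where E ≅ Λ is free of rank 1, identifying E with a submodule of B with soc E ⊆ A, then the pair splits: there exists B' with B = E ⊕ B' and A = soc E ⊕ (A ∩ B'). -/

import Mathlib

/-- If `p ^ m = 0` but `p ^ (n-1) ≠ 0` then `n ≤ m`. -/
lemma aux_pow_le {Λ : Type} [CommRing Λ] {p : Λ} {n : ℕ} (hlen' : p ^ (n - 1) ≠ 0)
    {m : ℕ} (hm : p ^ m = 0) : n ≤ m := by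
  by_contra h
  push_neg at h
  apply hlen'
  have : p ^ (n - 1) = p ^ m * p ^ (n - 1 - m) := by
    rw [← pow_add]; congr 1; omega
  rw [this, hm, zero_mul]

/-- Every nonzero element of a local ring with nilpotent principal maximal ideal is a unit
times a power of the generator. -/
lemma aux_factor {Λ : Type} [CommRing Λ] [IsLocalRing Λ] {p : Λ} {n : ℕ}
    (hmax : IsLocalRing.maximalIdeal Λ = Ideal.span {p}) (hlen : p ^ n = 0)
    {x : Λ} (hx : x ≠ 0) : ∃ (j : ℕ) (c : Λ), IsUnit c ∧ x = c * p ^ j := by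
  classical
  have hP : ∃ m, ¬ p ^ m ∣ x := ⟨n, by rw [hlen]; simpa using hx⟩
  set m := Nat.find hP with hm
  have hmspec : ¬ p ^ m ∣ x := Nat.find_spec hP
  have hm0 : m ≠ 0 := by
    intro h
    apply hmspec
    rw [h]; simp
  have hdvd : p ^ (m - 1) ∣ x := by
    have := Nat.find_min hP (m := m - 1) (by omega)
    simpa using this
  obtain ⟨c, hc⟩ := hdvd
  have hcu : IsUnit c := by
    by_contra hcu
    apply hmspec
    have hcmem : c ∈ IsLocalRing.maximalIdeal Λ := hcu
    rw [hmax, Ideal.mem_span_singleton] at hcmem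
    obtain ⟨d, rfl⟩ := hcmem
    refine ⟨d, ?_⟩
    have h2 : p ^ m = p ^ (m - 1) * p := by
      rw [← pow_succ]; congr 1; omega
    rw [hc, h2, mul_assoc]
  exact ⟨m - 1, c, hcu, by rw [hc]; ring⟩

/-- Baer's criterion holds for such a ring. -/
lemma aux_baer {Λ : Type} [CommRing Λ] [IsLocalRing Λ] {p : Λ} {n : ℕ}
    (hmax : IsLocalRing.maximalIdeal Λ = Ideal.span {p})
    (hlen : p ^ n = 0) (hlen' : p ^ (n - 1) ≠ 0) : Module.Baer Λ Λ := by
  classical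
  intro I g
  have hPk : ∃ k, p ^ k ∈ I := ⟨n, by rw [hlen]; exact I.zero_mem⟩
  set k := Nat.find hPk with hkdef
  have hk : p ^ k ∈ I := Nat.find_spec hPk
  have hkn : k ≤ n := Nat.find_min' hPk (by rw [hlen]; exact I.zero_mem)
  -- every element of I lies in span {p ^ k}
  have hIle : ∀ x ∈ I, p ^ k ∣ x := by
    intro x hx
    by_cases hx0 : x = 0
    · simp [hx0]
    obtain ⟨j, c, hc, rfl⟩ := aux_factor hmax hlen hx0
    obtain ⟨u, rfl⟩ := hc
    have hpj : p ^ j ∈ I := by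
      have : p ^ j = (↑u⁻¹ : Λ) * ((u : Λ) * p ^ j) := by
        rw [← mul_assoc]
        simp
      rw [this]
      exact I.mul_mem_left _ hx
    have hkj : k ≤ j := Nat.find_min' hPk hpj
    exact (pow_dvd_pow p hkj).trans (dvd_mul_left _ _)
  -- the image of p ^ k is divisible by p ^ k
  set y : Λ := g ⟨p ^ k, hk⟩ with hy
  have hann : p ^ (n - k) * y = 0 := by
    have h1 : p ^ (n - k) • (⟨p ^ k, hk⟩ : I) = 0 := by
      apply Subtype.ext
      show p ^ (n - k) • p ^ k = (0 : Λ)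
      rw [smul_eq_mul, ← pow_add]
      have : n - k + k = n := by omega
      rw [this, hlen]
    calc p ^ (n - k) * y = g (p ^ (n - k) • (⟨p ^ k, hk⟩ : I)) := by
          rw [map_smul, smul_eq_mul]
      _ = 0 := by rw [h1, map_zero]
  have hyd : p ^ k ∣ y := by
    by_cases hy0 : y = 0
    · simp [hy0]
    obtain ⟨j, c, hc, hcy⟩ := aux_factor hmax hlen hy0
    obtain ⟨u, rfl⟩ := hc
    have hz : p ^ (n - k + j) = 0 := by
      have : (↑u⁻¹ : Λ) * (p ^ (n - k) * y) = p ^ (n - k + j) := by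
        rw [hcy, pow_add]
        rw [show (↑u⁻¹ : Λ) * (p ^ (n - k) * (↑u * p ^ j)) = (↑u⁻¹ * ↑u) * (p ^ (n - k) * p ^ j) by ring, Units.inv_mul]
        ring
      rw [← this, hann, mul_zero]
    have : n ≤ n - k + j := aux_pow_le hlen' hz
    have hkj : k ≤ j := by omega
    rw [hcy]
    exact (pow_dvd_pow p hkj).trans (dvd_mul_left _ _)
  obtain ⟨z, hz⟩ := hyd
  refine ⟨z • LinearMap.id, ?_⟩
  intro x hx
  obtain ⟨w, hw⟩ := hIle x hx
  have hxw : (⟨x, hx⟩ : I) = w • (⟨p ^ k, hk⟩ : I) := by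
    apply Subtype.ext
    show x = w • p ^ k
    rw [smul_eq_mul, hw]; ring
  rw [hxw, map_smul, ← hy, hz]
  show z • x = w • (p ^ k * z)
  rw [smul_eq_mul, smul_eq_mul, hw]
  ring

theorem P1n_injective_splits_off
    (Λ : Type) [CommRing Λ] [IsLocalRing Λ] (p : Λ) (n : ℕ)
    (hmax : IsLocalRing.maximalIdeal Λ = Ideal.span {p})
    (huni : ∀ I J : Ideal Λ, I ≤ J ∨ J ≤ I)
    (hlen : p ^ n = 0) (hlen' : p ^ (n - 1) ≠ 0)
    (B : Type) [AddCommGroup B] [Module Λ B] [Module.Finite Λ B]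
    (A : Submodule Λ B) (hpA : ∀ a ∈ A, p • a = 0)
    (f : Λ →ₗ[Λ] B) (hf : Function.Injective f)
    (E : Submodule Λ B) (hE : E = LinearMap.range f)
    (hsoc : E ⊓ LinearMap.ker (LinearMap.lsmul Λ B p) ≤ A) :
    ∃ B' : Submodule Λ B, IsCompl E B' ∧
      A = (E ⊓ LinearMap.ker (LinearMap.lsmul Λ B p)) ⊔ (A ⊓ B') := by
  have hinj : Module.Injective Λ Λ := (aux_baer hmax hlen hlen').injective
  obtain ⟨h, hh⟩ := hinj.out f hf LinearMap.id
  simp only [LinearMap.id_apply] at hh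
  -- the projection onto E
  have hmem : ∀ b : B, f (h b) ∈ E := by
    intro b; rw [hE]; exact ⟨h b, rfl⟩
  set π : B →ₗ[Λ] E := LinearMap.codRestrict E (f.comp h) hmem with hπ
  have hproj : ∀ x : E, π x = x := by
    intro x
    obtain ⟨y, hy⟩ : (x : B) ∈ LinearMap.range f := by rw [← hE]; exact x.2
    apply Subtype.ext
    show f (h (x : B)) = (x : B)
    rw [← hy, hh]
  have hcompl : IsCompl E (LinearMap.ker π) := LinearMap.isCompl_of_proj hproj
  refine ⟨LinearMap.ker π, hcompl, le_antisymm ?_ (sup_le hsoc inf_le_left)⟩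
  intro a ha
  set e : B := f (h a) with he
  have heE : e ∈ E := hmem a
  have hpa : p • a = 0 := hpA a ha
  have hpe : p • e = 0 := by
    rw [he, ← map_smul, ← map_smul, hpa, map_zero, map_zero]
  have hesoc : e ∈ E ⊓ LinearMap.ker (LinearMap.lsmul Λ B p) := by
    exact ⟨heE, hpe⟩
  have hbker : a - e ∈ LinearMap.ker π := by
    rw [LinearMap.mem_ker]
    apply Subtype.ext
    show f (h (a - e)) = (0 : B)
    rw [map_sub, he, hh, sub_self, map_zero]
  have hbA : a - e ∈ A := A.sub_mem ha (hsoc hesoc)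
  exact Submodule.mem_sup.mpr ⟨e, hesoc, a - e, ⟨hbA, hbker⟩, by abel⟩
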